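/- arXiv:1402.0076 — 2 statements merged into one kernel-verified Lean document; each statement's English description precedes it below -/
import Mathlib

section
/- Let n ≥ 2, N > 0, and let ν ∈ ℝ^n with ν_1 = 1. Suppose q is a positive integer and p_2, …, p_n are integers with |ν_j − p_j/q| ≤ 1/q^{1+1/(n-1)} for j = 2, …, n. Define ν̃_1 = 1, ν̃_j = p_j/q, and α = N/q^{1+1/(n-1)}. If α is small enough (specifically if N^{n-1}·α < 2^{-n}), then for every integer vector k ∈ ℤ^n with |k|_1 ≤ N and ν̃·k ≠ 0 one has |ν·k| > α. -/
/-- Small denominator estimate (key step of Lemma 3 of the paper): if `ν̃` is the rational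
approximation of `ν` with common denominator `q` and `α = N/q^{1+1/(n-1)}` is small enough,
then every integer vector `k` with `|k|₁ ≤ N` that is nonresonant for `ν̃` satisfies
`|ν·k| > α`. -/
theorem small_denominator_estimate (n N q : ℕ) (hn : 2 ≤ n) (hN : 0 < N) (hq : 0 < q)
    (ν : Fin n → ℝ) (hν1 : ν ⟨0, by omega⟩ = 1) (p : Fin n → ℤ)
    (happrox : ∀ j, j ≠ ⟨0, by omega⟩ →
      |ν j - (p j : ℝ) / (q : ℝ)| ≤ 1 / (q : ℝ) ^ ((1 : ℝ) + 1 / ((n : ℝ) - 1)))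
    (ν' : Fin n → ℝ) (hν'0 : ν' ⟨0, by omega⟩ = 1)
    (hν' : ∀ j, j ≠ ⟨0, by omega⟩ → ν' j = (p j : ℝ) / (q : ℝ))
    (α : ℝ) (hα : α = (N : ℝ) / (q : ℝ) ^ ((1 : ℝ) + 1 / ((n : ℝ) - 1)))
    (hsmall : (N : ℝ) ^ (n - 1) * α < (2 : ℝ) ^ (-(n : ℤ))) :
    ∀ k : Fin n → ℤ, (∑ j, (k j).natAbs) ≤ N →
      (∑ j, ν' j * (k j : ℝ)) ≠ 0 → α < |∑ j, ν j * (k j : ℝ)| := by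
  intro k hk1 hk2
  set j0 : Fin n := ⟨0, by omega⟩ with hj0
  set E : ℝ := (q : ℝ) ^ ((1 : ℝ) + 1 / ((n : ℝ) - 1)) with hE
  have hq1 : (1 : ℝ) ≤ (q : ℝ) := by exact_mod_cast hq
  have hqR : (0 : ℝ) < (q : ℝ) := by linarith
  have hEpos : 0 < E := Real.rpow_pos_of_pos hqR _
  have hNR : (1 : ℝ) ≤ (N : ℝ) := by exact_mod_cast hN
  have hn1 : (1 : ℝ) ≤ (n : ℝ) - 1 := by
    have : (2 : ℝ) ≤ (n : ℝ) := by exact_mod_cast hn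
    linarith
  -- Key smallness: 2 * α < 1 / q
  have hkey : 2 * α < 1 / (q : ℝ) := by
    set r : ℝ := 1 / ((n : ℝ) - 1) with hr
    have hrpos : 0 < r := by positivity
    have hE' : E = (q : ℝ) * (q : ℝ) ^ r := by
      rw [hE, Real.rpow_add hqR, Real.rpow_one]
    have hQr : ((q : ℝ) ^ r) ^ (n - 1) = (q : ℝ) := by
      rw [← Real.rpow_natCast ((q : ℝ) ^ r) (n - 1), ← Real.rpow_mul (le_of_lt hqR)]
      have hcast : ((n - 1 : ℕ) : ℝ) = (n : ℝ) - 1 := by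
        have : (1 : ℕ) ≤ n := by omega
        push_cast [Nat.cast_sub this]
        ring
      rw [hcast, hr]
      rw [one_div_mul_cancel (by linarith : (n : ℝ) - 1 ≠ 0), Real.rpow_one]
    have hNn : (2 : ℝ) ^ n * (N : ℝ) ^ n < E := by
      have h2 : (2 : ℝ) ^ (-(n : ℤ)) = 1 / 2 ^ n := by
        rw [zpow_neg, zpow_natCast, one_div]
      rw [h2, hα] at hsmall
      have hNn' : (N : ℝ) ^ (n - 1) * (N : ℝ) = (N : ℝ) ^ n := by
        rw [← pow_succ]; congr 1; omega
      have h1 : (N : ℝ) ^ n / E < 1 / 2 ^ n := by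
        rw [← hNn', mul_div_assoc]; exact hsmall
      have h2pos : (0 : ℝ) < 2 ^ n := by positivity
      have := (div_lt_div_iff₀ hEpos h2pos).mp h1
      nlinarith
    have hQrgt : 2 * (N : ℝ) < (q : ℝ) ^ r := by
      by_contra h
      push_neg at h
      have hQle : (q : ℝ) ≤ (2 * (N : ℝ)) ^ (n - 1) := by
        rw [← hQr]
        exact pow_le_pow_left₀ (by positivity) h _
      have hEle : E ≤ (2 * (N : ℝ)) ^ n := by
        rw [hE']
        calc (q : ℝ) * (q : ℝ) ^ r ≤ (2 * (N : ℝ)) ^ (n - 1) * (2 * (N : ℝ)) := by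
              apply mul_le_mul hQle h (by positivity) (by positivity)
          _ = (2 * (N : ℝ)) ^ n := by rw [← pow_succ]; congr 1; omega
      have : (2 * (N : ℝ)) ^ n = 2 ^ n * (N : ℝ) ^ n := by rw [mul_pow]
      linarith
    rw [hα]
    rw [show 2 * ((N : ℝ) / E) = (2 * (N : ℝ)) / E by ring]
    rw [div_lt_div_iff₀ hEpos hqR, one_mul, hE']
    nlinarith
  -- The approximate sum is a rational with denominator q
  set m : ℤ := q * k j0 + ∑ j ∈ Finset.univ.erase j0, p j * k j with hm
  have hsum' : (∑ j, ν' j * (k j : ℝ)) = (m : ℝ) / q := by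
    rw [← Finset.sum_erase_add _ _ (Finset.mem_univ j0), hν'0, one_mul]
    rw [Finset.sum_congr rfl fun j hj => by rw [hν' j (Finset.ne_of_mem_erase hj)]]
    have hmcast : (m : ℝ) = q * k j0 + ∑ j ∈ Finset.univ.erase j0, (p j : ℝ) * k j := by
      rw [hm]; push_cast; ring
    rw [hmcast, add_div, mul_div_cancel_left₀ _ (ne_of_gt hqR), Finset.sum_div, add_comm]
    congr 1
    exact Finset.sum_congr rfl fun j _ => by ring
  have hm0 : m ≠ 0 := by
    intro h
    apply hk2
    rw [hsum', h]
    simp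
  have hm1 : (1 : ℝ) ≤ |(m : ℝ)| := by
    have : (1 : ℤ) ≤ |m| := Int.one_le_abs (by omega)
    calc (1 : ℝ) ≤ ((|m| : ℤ) : ℝ) := by exact_mod_cast this
      _ = |(m : ℝ)| := by push_cast; rfl
  have hlow : 1 / (q : ℝ) ≤ |∑ j, ν' j * (k j : ℝ)| := by
    rw [hsum', abs_div, abs_of_pos hqR]
    gcongr
  -- Difference bound
  have hdiff : |(∑ j, ν j * (k j : ℝ)) - ∑ j, ν' j * (k j : ℝ)| ≤ α := by
    rw [← Finset.sum_sub_distrib]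
    calc |∑ j, (ν j * (k j : ℝ) - ν' j * (k j : ℝ))|
        ≤ ∑ j, |ν j * (k j : ℝ) - ν' j * (k j : ℝ)| := Finset.abs_sum_le_sum_abs _ _
      _ ≤ ∑ j, (1 / E) * |(k j : ℝ)| := by
          apply Finset.sum_le_sum
          intro j _
          rw [← sub_mul, abs_mul]
          apply mul_le_mul_of_nonneg_right _ (abs_nonneg _)
          by_cases h : j = j0
          · subst h
            rw [hν1, hν'0]
            simp only [sub_self, abs_zero]
            positivity
          · rw [hν' j h]
            exact happrox j h
      _ = (1 / E) * ∑ j, |(k j : ℝ)| := by rw [Finset.mul_sum]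
      _ ≤ (1 / E) * N := by
          apply mul_le_mul_of_nonneg_left _ (by positivity)
          have hsumabs : (∑ j, |(k j : ℝ)|) = ((∑ j, (k j).natAbs : ℕ) : ℝ) := by
            push_cast [Nat.cast_natAbs]
            rfl
          rw [hsumabs]
          exact_mod_cast hk1
      _ = α := by rw [hα]; ring
  have habs := abs_sub_abs_le_abs_sub (∑ j, ν' j * (k j : ℝ)) (∑ j, ν j * (k j : ℝ))
  rw [abs_sub_comm] at habs
  linarith
end

section
/- Fix ε > 0 and n ≥ 1. Define, for s ≥ 0, the ℂ-vector space 𝒫_s of polynomials in variables (ξ, η) ∈ ℂ^n × ℂ^n (with coefficients smooth functions of auxiliary variables (P,Q)) spanned by monomials (√ε)^{a+2} ξ^l η^m with a + |l| + |m| = s and a ≥ |l| + |m|. If g₁ ∈ 𝒫_{s₁} and g₂ ∈ 𝒫_{s₂}, then the Poisson bracket {g₁, g₂} (sum of the bracket in the (P,Q) variables and the bracket in the (ξ,η) variables) lies in 𝒫_{s₁+s₂} ⊕ 𝒫_{s₁+s₂+2}. -/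
noncomputable section
open scoped BigOperators Classical

/-- The phase space `(P,Q,ξ,η)` (complexified). -/
abbrev PhSp (d n : ℕ) := ((Fin d → ℂ) × (Fin d → ℂ)) × ((Fin n → ℂ) × (Fin n → ℂ))

/-- Index `(a, l, m)` of a monomial `(√ε)^{a+2} ξ^l η^m`. -/
abbrev Idx (n : ℕ) := ℕ × (Fin n → ℕ) × (Fin n → ℕ)

/-- The monomial `(√ε)^{a+2} ξ^l η^m`. -/
def monomial (d n : ℕ) (ε : ℝ) (x : Idx n) : PhSp d n → ℂ :=
  fun z => ((Real.sqrt ε : ℝ) : ℂ) ^ (x.1 + 2) *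
    (∏ j, z.2.1 j ^ x.2.1 j) * (∏ j, z.2.2 j ^ x.2.2 j)

/-- The order `a + |l| + |m|` of the index `(a,l,m)`. -/
def degIdx (n : ℕ) (x : Idx n) : ℕ := x.1 + (∑ j, x.2.1 j) + (∑ j, x.2.2 j)

/-- Membership in the graded space `𝒫_s`: finite linear combinations, with smooth
coefficients in `(P,Q)`, of monomials `(√ε)^{a+2} ξ^l η^m` with `a + |l| + |m| = s`
and `a ≥ |l| + |m|`. -/
def InP (d n : ℕ) (ε : ℝ) (s : ℕ) (F : PhSp d n → ℂ) : Prop :=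
  ∃ (S : Finset (Idx n)) (c : Idx n → ((Fin d → ℂ) × (Fin d → ℂ)) → ℂ),
    (∀ x ∈ S, degIdx n x = s ∧ (∑ j, x.2.1 j) + (∑ j, x.2.2 j) ≤ x.1) ∧
    (∀ x, ContDiff ℂ ⊤ (c x)) ∧
    F = fun z => ∑ x ∈ S, c x z.1 * monomial d n ε x z

/-- Partial derivative in `P j`. -/
def pdP (d n : ℕ) (j : Fin d) (F : PhSp d n → ℂ) : PhSp d n → ℂ :=
  fun z => fderiv ℂ F z (((Pi.single j 1 : Fin d → ℂ), 0), (0, 0))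

/-- Partial derivative in `Q j`. -/
def pdQ (d n : ℕ) (j : Fin d) (F : PhSp d n → ℂ) : PhSp d n → ℂ :=
  fun z => fderiv ℂ F z ((0, (Pi.single j 1 : Fin d → ℂ)), (0, 0))

/-- Partial derivative in `ξ j`. -/
def pdXi (d n : ℕ) (j : Fin n) (F : PhSp d n → ℂ) : PhSp d n → ℂ :=
  fun z => fderiv ℂ F z ((0, 0), ((Pi.single j 1 : Fin n → ℂ), 0))

/-- Partial derivative in `η j`. -/
def pdEta (d n : ℕ) (j : Fin n) (F : PhSp d n → ℂ) : PhSp d n → ℂ :=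
  fun z => fderiv ℂ F z ((0, 0), (0, (Pi.single j 1 : Fin n → ℂ)))

/-- The Poisson bracket: sum of the bracket in the `(P,Q)` variables and of the bracket
in the `(ξ,η)` variables. -/
def pBr (d n : ℕ) (F G : PhSp d n → ℂ) : PhSp d n → ℂ :=
  fun z => (∑ j, (pdP d n j F z * pdQ d n j G z - pdQ d n j F z * pdP d n j G z))
    + (∑ j, (pdXi d n j F z * pdEta d n j G z - pdEta d n j F z * pdXi d n j G z))

/-- The quadratic Hamiltonian `h_ν = Σ_j ν_j ξ_j η_j` (no `ε` prefactor). -/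
def hQuad (d n : ℕ) (ν : Fin n → ℝ) : PhSp d n → ℂ :=
  fun z => ∑ j, (ν j : ℂ) * z.2.1 j * z.2.2 j


/-! ### Auxiliary material for Lemma 4 -/

namespace LPoisson

open Finset

variable {d n : ℕ}

/-- Product of indices: `monomial x * monomial y = monomial (mulIdx x y)`. -/
def mulIdx (x y : Idx n) : Idx n :=
  (x.1 + y.1 + 2, fun j => x.2.1 j + y.2.1 j, fun j => x.2.2 j + y.2.2 j)

/-- Index obtained by differentiating in `ξ j`. -/
def decXi (x : Idx n) (j : Fin n) : Idx n :=
  (x.1, Function.update x.2.1 j (x.2.1 j - 1), x.2.2)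

/-- Index obtained by differentiating in `η j`. -/
def decEta (x : Idx n) (j : Fin n) : Idx n :=
  (x.1, x.2.1, Function.update x.2.2 j (x.2.2 j - 1))

lemma sum_update_sub_one (l : Fin n → ℕ) (j : Fin n) (h : l j ≠ 0) :
    (∑ k, Function.update l j (l j - 1) k) + 1 = ∑ k, l k := by
  rw [Finset.sum_update_of_mem (Finset.mem_univ j), ← Finset.erase_eq,
    ← Finset.add_sum_erase _ l (Finset.mem_univ j)]
  omega

lemma monomial_mul (ε : ℝ) (x y : Idx n) (z : PhSp d n) :
    monomial d n ε x z * monomial d n ε y z = monomial d n ε (mulIdx x y) z := by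
  simp only [monomial, mulIdx, pow_add, Finset.prod_mul_distrib]
  ring

lemma prod_pow_update (w : Fin n → ℂ) (l : Fin n → ℕ) (j : Fin n) (m : ℕ) :
    (∏ k, w k ^ Function.update l j m k) = w j ^ m * ∏ k ∈ Finset.univ.erase j, w k ^ l k := by
  rw [← Finset.mul_prod_erase Finset.univ _ (Finset.mem_univ j), Function.update_self]
  congr 1
  exact Finset.prod_congr rfl fun k hk => by
    rw [Function.update_of_ne (Finset.ne_of_mem_erase hk)]

/-- Coordinate projection `ξ j` as a continuous linear map. -/
def cXi (d n : ℕ) (j : Fin n) : PhSp d n →L[ℂ] ℂ :=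
  (ContinuousLinearMap.proj j).comp
    ((ContinuousLinearMap.fst ℂ (Fin n → ℂ) (Fin n → ℂ)).comp
      (ContinuousLinearMap.snd ℂ ((Fin d → ℂ) × (Fin d → ℂ)) ((Fin n → ℂ) × (Fin n → ℂ))))

/-- Coordinate projection `η j` as a continuous linear map. -/
def cEta (d n : ℕ) (j : Fin n) : PhSp d n →L[ℂ] ℂ :=
  (ContinuousLinearMap.proj j).comp
    ((ContinuousLinearMap.snd ℂ (Fin n → ℂ) (Fin n → ℂ)).comp
      (ContinuousLinearMap.snd ℂ ((Fin d → ℂ) × (Fin d → ℂ)) ((Fin n → ℂ) × (Fin n → ℂ))))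

@[simp] lemma cXi_apply (j : Fin n) (v : PhSp d n) : cXi d n j v = v.2.1 j := rfl
@[simp] lemma cEta_apply (j : Fin n) (v : PhSp d n) : cEta d n j v = v.2.2 j := rfl

/-- Derivative of `z ↦ ∏ ξ^l`. -/
def dXiP (x : Idx n) (z : PhSp d n) : PhSp d n →L[ℂ] ℂ :=
  ∑ i, (∏ k ∈ Finset.univ.erase i, z.2.1 k ^ x.2.1 k) •
    (((x.2.1 i : ℂ) * z.2.1 i ^ (x.2.1 i - 1)) • cXi d n i)

/-- Derivative of `z ↦ ∏ η^m`. -/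
def dEtaP (x : Idx n) (z : PhSp d n) : PhSp d n →L[ℂ] ℂ :=
  ∑ i, (∏ k ∈ Finset.univ.erase i, z.2.2 k ^ x.2.2 k) •
    (((x.2.2 i : ℂ) * z.2.2 i ^ (x.2.2 i - 1)) • cEta d n i)

lemma hasFDerivAt_prodXi (x : Idx n) (z : PhSp d n) :
    HasFDerivAt (fun z : PhSp d n => ∏ j, z.2.1 j ^ x.2.1 j) (dXiP x z) z :=
  HasFDerivAt.finset_prod fun i _ =>
    (hasDerivAt_pow (x.2.1 i) (z.2.1 i)).comp_hasFDerivAt z (cXi d n i).hasFDerivAt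

lemma hasFDerivAt_prodEta (x : Idx n) (z : PhSp d n) :
    HasFDerivAt (fun z : PhSp d n => ∏ j, z.2.2 j ^ x.2.2 j) (dEtaP x z) z :=
  HasFDerivAt.finset_prod fun i _ =>
    (hasDerivAt_pow (x.2.2 i) (z.2.2 i)).comp_hasFDerivAt z (cEta d n i).hasFDerivAt

/-- Derivative of the monomial. -/
def dmon (ε : ℝ) (x : Idx n) (z : PhSp d n) : PhSp d n →L[ℂ] ℂ :=
  (((Real.sqrt ε : ℝ) : ℂ) ^ (x.1 + 2) * ∏ j, z.2.1 j ^ x.2.1 j) • dEtaP x z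
    + (∏ j, z.2.2 j ^ x.2.2 j) • (((Real.sqrt ε : ℝ) : ℂ) ^ (x.1 + 2) • dXiP x z)

lemma hasFDerivAt_monomial (ε : ℝ) (x : Idx n) (z : PhSp d n) :
    HasFDerivAt (monomial d n ε x) (dmon ε x z) z :=
  ((hasFDerivAt_prodXi x z).const_mul _).mul (hasFDerivAt_prodEta x z)

lemma dmon_apply_PQ (ε : ℝ) (x : Idx n) (z : PhSp d n) (v : (Fin d → ℂ) × (Fin d → ℂ)) :
    dmon ε x z (v, 0) = 0 := by
  simp [dmon, dXiP, dEtaP, ContinuousLinearMap.sum_apply]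

lemma dmon_apply_xi (ε : ℝ) (x : Idx n) (z : PhSp d n) (j : Fin n) :
    dmon ε x z (0, ((Pi.single j 1 : Fin n → ℂ), 0)) =
      (x.2.1 j : ℂ) * monomial d n ε (decXi x j) z := by
  simp only [dmon, dXiP, dEtaP, ContinuousLinearMap.add_apply, ContinuousLinearMap.smul_apply,
    ContinuousLinearMap.sum_apply, cXi_apply, cEta_apply, smul_eq_mul]
  simp only [Pi.single_apply, monomial, decXi, prod_pow_update, mul_ite, mul_one, mul_zero,
    Finset.sum_ite_eq', Finset.mem_univ, if_true, Pi.zero_apply, Finset.sum_const_zero,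
    mul_zero, zero_mul, add_zero, zero_add]
  ring

lemma dmon_apply_eta (ε : ℝ) (x : Idx n) (z : PhSp d n) (j : Fin n) :
    dmon ε x z (0, (0, (Pi.single j 1 : Fin n → ℂ))) =
      (x.2.2 j : ℂ) * monomial d n ε (decEta x j) z := by
  simp only [dmon, dXiP, dEtaP, ContinuousLinearMap.add_apply, ContinuousLinearMap.smul_apply,
    ContinuousLinearMap.sum_apply, cXi_apply, cEta_apply, smul_eq_mul]
  simp only [Pi.single_apply, monomial, decEta, prod_pow_update, mul_ite, mul_one, mul_zero,
    Finset.sum_ite_eq', Finset.mem_univ, if_true, Pi.zero_apply, Finset.sum_const_zero,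
    mul_zero, zero_mul, add_zero, zero_add]
  ring

lemma hasFDerivAt_term (ε : ℝ) (x : Idx n) (c : ((Fin d → ℂ) × (Fin d → ℂ)) → ℂ)
    (hc : Differentiable ℂ c) (z : PhSp d n) :
    HasFDerivAt (fun z : PhSp d n => c z.1 * monomial d n ε x z)
      (c z.1 • dmon ε x z + monomial d n ε x z •
        ((fderiv ℂ c z.1).comp (ContinuousLinearMap.fst ℂ
          ((Fin d → ℂ) × (Fin d → ℂ)) ((Fin n → ℂ) × (Fin n → ℂ))))) z := by
  have h1 : HasFDerivAt (fun z : PhSp d n => c z.1)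
      ((fderiv ℂ c z.1).comp (ContinuousLinearMap.fst ℂ
        ((Fin d → ℂ) × (Fin d → ℂ)) ((Fin n → ℂ) × (Fin n → ℂ)))) z :=
    ((hc z.1).hasFDerivAt).comp z hasFDerivAt_fst
  exact h1.mul (hasFDerivAt_monomial ε x z)

lemma pdP_sum (ε : ℝ) (S : Finset (Idx n)) (c : Idx n → ((Fin d → ℂ) × (Fin d → ℂ)) → ℂ)
    (hc : ∀ x, ContDiff ℂ ⊤ (c x)) (j : Fin d) (z : PhSp d n) :
    pdP d n j (fun z => ∑ x ∈ S, c x z.1 * monomial d n ε x z) z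
      = ∑ x ∈ S, fderiv ℂ (c x) z.1 ((Pi.single j 1 : Fin d → ℂ), 0) * monomial d n ε x z := by
  rw [pdP, fderiv_fun_sum fun x _ =>
    (hasFDerivAt_term ε x (c x) ((hc x).differentiable (by simp)) z).differentiableAt]
  rw [ContinuousLinearMap.sum_apply]
  refine Finset.sum_congr rfl fun x _ => ?_
  rw [(hasFDerivAt_term ε x (c x) ((hc x).differentiable (by simp)) z).fderiv]
  simp [dmon_apply_PQ, mul_comm, Prod.mk_zero_zero]

lemma pdQ_sum (ε : ℝ) (S : Finset (Idx n)) (c : Idx n → ((Fin d → ℂ) × (Fin d → ℂ)) → ℂ)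
    (hc : ∀ x, ContDiff ℂ ⊤ (c x)) (j : Fin d) (z : PhSp d n) :
    pdQ d n j (fun z => ∑ x ∈ S, c x z.1 * monomial d n ε x z) z
      = ∑ x ∈ S, fderiv ℂ (c x) z.1 (0, (Pi.single j 1 : Fin d → ℂ)) * monomial d n ε x z := by
  rw [pdQ, fderiv_fun_sum fun x _ =>
    (hasFDerivAt_term ε x (c x) ((hc x).differentiable (by simp)) z).differentiableAt]
  rw [ContinuousLinearMap.sum_apply]
  refine Finset.sum_congr rfl fun x _ => ?_
  rw [(hasFDerivAt_term ε x (c x) ((hc x).differentiable (by simp)) z).fderiv]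
  simp [dmon_apply_PQ, mul_comm, Prod.mk_zero_zero]

lemma pdXi_sum (ε : ℝ) (S : Finset (Idx n)) (c : Idx n → ((Fin d → ℂ) × (Fin d → ℂ)) → ℂ)
    (hc : ∀ x, ContDiff ℂ ⊤ (c x)) (j : Fin n) (z : PhSp d n) :
    pdXi d n j (fun z => ∑ x ∈ S, c x z.1 * monomial d n ε x z) z
      = ∑ x ∈ S, c x z.1 * ((x.2.1 j : ℂ) * monomial d n ε (decXi x j) z) := by
  rw [pdXi, fderiv_fun_sum fun x _ =>
    (hasFDerivAt_term ε x (c x) ((hc x).differentiable (by simp)) z).differentiableAt]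
  rw [ContinuousLinearMap.sum_apply]
  refine Finset.sum_congr rfl fun x _ => ?_
  rw [(hasFDerivAt_term ε x (c x) ((hc x).differentiable (by simp)) z).fderiv]
  simp [dmon_apply_xi, Prod.mk_zero_zero]

lemma pdEta_sum (ε : ℝ) (S : Finset (Idx n)) (c : Idx n → ((Fin d → ℂ) × (Fin d → ℂ)) → ℂ)
    (hc : ∀ x, ContDiff ℂ ⊤ (c x)) (j : Fin n) (z : PhSp d n) :
    pdEta d n j (fun z => ∑ x ∈ S, c x z.1 * monomial d n ε x z) z
      = ∑ x ∈ S, c x z.1 * ((x.2.2 j : ℂ) * monomial d n ε (decEta x j) z) := by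
  rw [pdEta, fderiv_fun_sum fun x _ =>
    (hasFDerivAt_term ε x (c x) ((hc x).differentiable (by simp)) z).differentiableAt]
  rw [ContinuousLinearMap.sum_apply]
  refine Finset.sum_congr rfl fun x _ => ?_
  rw [(hasFDerivAt_term ε x (c x) ((hc x).differentiable (by simp)) z).fderiv]
  simp [dmon_apply_eta, Prod.mk_zero_zero]

/-! ### Closure properties of `InP` -/

lemma InP_zero (ε : ℝ) (s : ℕ) : InP d n ε s (fun _ => 0) :=
  ⟨∅, fun _ _ => 0, by simp, fun _ => contDiff_const, by simp⟩

lemma InP_add {ε : ℝ} {s : ℕ} {F G : PhSp d n → ℂ} (hF : InP d n ε s F)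
    (hG : InP d n ε s G) : InP d n ε s (fun z => F z + G z) := by
  obtain ⟨S₁, c₁, h₁, hc₁, hF⟩ := hF
  obtain ⟨S₂, c₂, h₂, hc₂, hG⟩ := hG
  refine ⟨S₁ ∪ S₂, fun x => (if x ∈ S₁ then c₁ x else 0) + (if x ∈ S₂ then c₂ x else 0),
    ?_, ?_, ?_⟩
  · intro x hx
    rcases Finset.mem_union.1 hx with h | h
    exacts [h₁ x h, h₂ x h]
  · intro x
    apply ContDiff.add <;> split <;>
      first | exact hc₁ _ | exact hc₂ _ | exact contDiff_const
  · funext z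
    rw [hF, hG]
    simp only [Pi.add_apply, apply_ite (fun f : ((Fin d → ℂ) × (Fin d → ℂ)) → ℂ => f z.1),
      Pi.zero_apply, add_mul, ite_mul, zero_mul, Finset.sum_add_distrib,
      Finset.sum_ite_mem, Finset.union_inter_cancel_left, Finset.union_inter_cancel_right]

lemma InP_neg {ε : ℝ} {s : ℕ} {F : PhSp d n → ℂ} (hF : InP d n ε s F) :
    InP d n ε s (fun z => -F z) := by
  obtain ⟨S, c, h, hc, hF⟩ := hF
  refine ⟨S, fun x P => -(c x P), h, fun x => (hc x).neg, ?_⟩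
  funext z
  rw [hF, ← Finset.sum_neg_distrib]
  simp [neg_mul]

lemma InP_sub {ε : ℝ} {s : ℕ} {F G : PhSp d n → ℂ} (hF : InP d n ε s F)
    (hG : InP d n ε s G) : InP d n ε s (fun z => F z - G z) := by
  simpa [sub_eq_add_neg] using InP_add hF (InP_neg hG)

lemma InP_sum {ε : ℝ} {s : ℕ} {ι : Type*} (T : Finset ι) (f : ι → PhSp d n → ℂ)
    (h : ∀ t ∈ T, InP d n ε s (f t)) : InP d n ε s (fun z => ∑ t ∈ T, f t z) := by
  classical
  induction T using Finset.induction_on with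
  | empty => simpa using InP_zero (d := d) (n := n) ε s
  | @insert a T ha ih =>
    have e : (fun z => ∑ t ∈ insert a T, f t z) = fun z => f a z + ∑ t ∈ T, f t z :=
      funext fun z => Finset.sum_insert ha
    rw [e]
    exact InP_add (h a (Finset.mem_insert_self a T))
      (ih fun t ht => h t (Finset.mem_insert_of_mem ht))

lemma InP_single (ε : ℝ) (s : ℕ) (x : Idx n) (c : ((Fin d → ℂ) × (Fin d → ℂ)) → ℂ)
    (hc : ContDiff ℂ ⊤ c) (hdeg : degIdx n x = s)
    (hcon : (∑ j, x.2.1 j) + (∑ j, x.2.2 j) ≤ x.1) :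
    InP d n ε s (fun z => c z.1 * monomial d n ε x z) := by
  classical
  refine ⟨{x}, fun y => if y = x then c else 0, ?_, ?_, ?_⟩
  · intro y hy
    rw [Finset.mem_singleton] at hy
    subst hy
    exact ⟨hdeg, hcon⟩
  · intro y
    dsimp only
    split
    exacts [hc, contDiff_const]
  · funext z
    rw [Finset.sum_singleton]
    simp

lemma contDiff_pd (c : ((Fin d → ℂ) × (Fin d → ℂ)) → ℂ) (hc : ContDiff ℂ ⊤ c)
    (v : (Fin d → ℂ) × (Fin d → ℂ)) : ContDiff ℂ ⊤ (fun P => fderiv ℂ c P v) :=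
  (hc.fderiv_right le_top).clm_apply contDiff_const

/-! ### Index arithmetic -/

lemma sum_l_mulIdx (x y : Idx n) :
    (∑ k, (mulIdx x y).2.1 k) = (∑ k, x.2.1 k) + ∑ k, y.2.1 k := by
  simp [mulIdx, Finset.sum_add_distrib]

lemma sum_m_mulIdx (x y : Idx n) :
    (∑ k, (mulIdx x y).2.2 k) = (∑ k, x.2.2 k) + ∑ k, y.2.2 k := by
  simp [mulIdx, Finset.sum_add_distrib]

lemma a_mulIdx (x y : Idx n) : (mulIdx x y).1 = x.1 + y.1 + 2 := rfl

lemma deg_decdec₁ (x y : Idx n) (j : Fin n) (hx : x.2.1 j ≠ 0) (hy : y.2.2 j ≠ 0) :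
    degIdx n (mulIdx (decXi x j) (decEta y j)) = degIdx n x + degIdx n y ∧
    (∑ k, (mulIdx (decXi x j) (decEta y j)).2.1 k)
      + (∑ k, (mulIdx (decXi x j) (decEta y j)).2.2 k) + 2
      = ((∑ k, x.2.1 k) + (∑ k, x.2.2 k)) + ((∑ k, y.2.1 k) + (∑ k, y.2.2 k)) ∧
    (mulIdx (decXi x j) (decEta y j)).1 = x.1 + y.1 + 2 := by
  have e1 := sum_update_sub_one x.2.1 j hx
  have e2 := sum_update_sub_one y.2.2 j hy
  refine ⟨?_, ?_, rfl⟩ <;>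
  · dsimp only [degIdx, mulIdx, decXi, decEta]
    rw [Finset.sum_add_distrib, Finset.sum_add_distrib]
    omega

lemma deg_decdec₂ (x y : Idx n) (j : Fin n) (hx : x.2.2 j ≠ 0) (hy : y.2.1 j ≠ 0) :
    degIdx n (mulIdx (decEta x j) (decXi y j)) = degIdx n x + degIdx n y ∧
    (∑ k, (mulIdx (decEta x j) (decXi y j)).2.1 k)
      + (∑ k, (mulIdx (decEta x j) (decXi y j)).2.2 k) + 2
      = ((∑ k, x.2.1 k) + (∑ k, x.2.2 k)) + ((∑ k, y.2.1 k) + (∑ k, y.2.2 k)) ∧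
    (mulIdx (decEta x j) (decXi y j)).1 = x.1 + y.1 + 2 := by
  have e1 := sum_update_sub_one x.2.2 j hx
  have e2 := sum_update_sub_one y.2.1 j hy
  refine ⟨?_, ?_, rfl⟩ <;>
  · dsimp only [degIdx, mulIdx, decXi, decEta]
    rw [Finset.sum_add_distrib, Finset.sum_add_distrib]
    omega

end LPoisson

/-- Lemma 4 (l.poisson): `{𝒫_{s₁}, 𝒫_{s₂}} ⊂ 𝒫_{s₁+s₂} ⊕ 𝒫_{s₁+s₂+2}`. -/
theorem poisson_bracket_grading (d n : ℕ) (ε : ℝ) (hε : 0 < ε) (s₁ s₂ : ℕ)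
    (g₁ g₂ : PhSp d n → ℂ) (h₁ : InP d n ε s₁ g₁) (h₂ : InP d n ε s₂ g₂) :
    ∃ F₁ F₂ : PhSp d n → ℂ, InP d n ε (s₁ + s₂) F₁ ∧ InP d n ε (s₁ + s₂ + 2) F₂ ∧
      pBr d n g₁ g₂ = F₁ + F₂ := by
  classical
  open LPoisson in
  obtain ⟨S₁, c₁, hS₁, hc₁, hg₁⟩ := h₁
  obtain ⟨S₂, c₂, hS₂, hc₂, hg₂⟩ := h₂
  subst hg₁ hg₂
  refine ⟨fun z => ∑ j, (pdXi d n j (fun z => ∑ x ∈ S₁, c₁ x z.1 * monomial d n ε x z) z *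
        pdEta d n j (fun z => ∑ x ∈ S₂, c₂ x z.1 * monomial d n ε x z) z -
      pdEta d n j (fun z => ∑ x ∈ S₁, c₁ x z.1 * monomial d n ε x z) z *
        pdXi d n j (fun z => ∑ x ∈ S₂, c₂ x z.1 * monomial d n ε x z) z),
    fun z => ∑ j, (pdP d n j (fun z => ∑ x ∈ S₁, c₁ x z.1 * monomial d n ε x z) z *
        pdQ d n j (fun z => ∑ x ∈ S₂, c₂ x z.1 * monomial d n ε x z) z -
      pdQ d n j (fun z => ∑ x ∈ S₁, c₁ x z.1 * monomial d n ε x z) z *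
        pdP d n j (fun z => ∑ x ∈ S₂, c₂ x z.1 * monomial d n ε x z) z), ?_, ?_, ?_⟩
  · -- the (ξ,η) part has order s₁ + s₂
    refine LPoisson.InP_sum Finset.univ _ fun j _ => ?_
    simp only [LPoisson.pdXi_sum ε S₁ c₁ hc₁ j, LPoisson.pdEta_sum ε S₂ c₂ hc₂ j,
      LPoisson.pdEta_sum ε S₁ c₁ hc₁ j, LPoisson.pdXi_sum ε S₂ c₂ hc₂ j]
    simp only [Finset.sum_mul_sum, ← Finset.sum_sub_distrib]
    refine LPoisson.InP_sum S₁ _ fun x hx => ?_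
    refine LPoisson.InP_sum S₂ _ fun y hy => ?_
    obtain ⟨hx1, hx2⟩ := hS₁ x hx
    obtain ⟨hy1, hy2⟩ := hS₂ y hy
    refine LPoisson.InP_sub ?_ ?_
    · by_cases h0 : x.2.1 j = 0
      · simp only [h0, Nat.cast_zero, zero_mul, mul_zero]
        exact LPoisson.InP_zero ε _
      by_cases h1 : y.2.2 j = 0
      · simp only [h1, Nat.cast_zero, zero_mul, mul_zero]
        exact LPoisson.InP_zero ε _
      have key : (fun z : PhSp d n =>
          (c₁ x z.1 * ((x.2.1 j : ℂ) * monomial d n ε (LPoisson.decXi x j) z)) *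
            (c₂ y z.1 * ((y.2.2 j : ℂ) * monomial d n ε (LPoisson.decEta y j) z)))
          = fun z => ((x.2.1 j : ℂ) * (y.2.2 j : ℂ) * (c₁ x z.1 * c₂ y z.1)) *
            monomial d n ε (LPoisson.mulIdx (LPoisson.decXi x j) (LPoisson.decEta y j)) z := by
        funext z
        rw [← LPoisson.monomial_mul]
        ring
      rw [key]
      obtain ⟨d1, d2, d3⟩ := LPoisson.deg_decdec₁ x y j h0 h1
      refine LPoisson.InP_single ε _ _
        (fun P => (x.2.1 j : ℂ) * (y.2.2 j : ℂ) * (c₁ x P * c₂ y P))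
        (contDiff_const.mul ((hc₁ x).mul (hc₂ y))) ?_ ?_
      · omega
      · omega
    · by_cases h0 : x.2.2 j = 0
      · simp only [h0, Nat.cast_zero, zero_mul, mul_zero]
        exact LPoisson.InP_zero ε _
      by_cases h1 : y.2.1 j = 0
      · simp only [h1, Nat.cast_zero, zero_mul, mul_zero]
        exact LPoisson.InP_zero ε _
      have key : (fun z : PhSp d n =>
          (c₁ x z.1 * ((x.2.2 j : ℂ) * monomial d n ε (LPoisson.decEta x j) z)) *
            (c₂ y z.1 * ((y.2.1 j : ℂ) * monomial d n ε (LPoisson.decXi y j) z)))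
          = fun z => ((x.2.2 j : ℂ) * (y.2.1 j : ℂ) * (c₁ x z.1 * c₂ y z.1)) *
            monomial d n ε (LPoisson.mulIdx (LPoisson.decEta x j) (LPoisson.decXi y j)) z := by
        funext z
        rw [← LPoisson.monomial_mul]
        ring
      rw [key]
      obtain ⟨d1, d2, d3⟩ := LPoisson.deg_decdec₂ x y j h0 h1
      refine LPoisson.InP_single ε _ _
        (fun P => (x.2.2 j : ℂ) * (y.2.1 j : ℂ) * (c₁ x P * c₂ y P))
        (contDiff_const.mul ((hc₁ x).mul (hc₂ y))) ?_ ?_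
      · omega
      · omega
  · -- the (P,Q) part has order s₁ + s₂ + 2
    refine LPoisson.InP_sum Finset.univ _ fun j _ => ?_
    simp only [LPoisson.pdP_sum ε S₁ c₁ hc₁ j, LPoisson.pdQ_sum ε S₂ c₂ hc₂ j,
      LPoisson.pdQ_sum ε S₁ c₁ hc₁ j, LPoisson.pdP_sum ε S₂ c₂ hc₂ j]
    simp only [Finset.sum_mul_sum, ← Finset.sum_sub_distrib]
    refine LPoisson.InP_sum S₁ _ fun x hx => ?_
    refine LPoisson.InP_sum S₂ _ fun y hy => ?_
    obtain ⟨hx1, hx2⟩ := hS₁ x hx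
    obtain ⟨hy1, hy2⟩ := hS₂ y hy
    have hdeg : degIdx n (LPoisson.mulIdx x y) = s₁ + s₂ + 2 := by
      have := LPoisson.sum_l_mulIdx x y
      have := LPoisson.sum_m_mulIdx x y
      have := LPoisson.a_mulIdx x y
      simp only [degIdx] at hx1 hy1 ⊢
      omega
    have hcon : (∑ k, (LPoisson.mulIdx x y).2.1 k) + (∑ k, (LPoisson.mulIdx x y).2.2 k)
        ≤ (LPoisson.mulIdx x y).1 := by
      have := LPoisson.sum_l_mulIdx x y
      have := LPoisson.sum_m_mulIdx x y
      have := LPoisson.a_mulIdx x y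
      omega
    refine LPoisson.InP_sub ?_ ?_
    · have key : (fun z : PhSp d n =>
          (fderiv ℂ (c₁ x) z.1 ((Pi.single j 1 : Fin d → ℂ), 0) * monomial d n ε x z) *
            (fderiv ℂ (c₂ y) z.1 (0, (Pi.single j 1 : Fin d → ℂ)) * monomial d n ε y z))
          = fun z => (fderiv ℂ (c₁ x) z.1 ((Pi.single j 1 : Fin d → ℂ), 0) *
              fderiv ℂ (c₂ y) z.1 (0, (Pi.single j 1 : Fin d → ℂ))) *
            monomial d n ε (LPoisson.mulIdx x y) z := by
        funext z
        rw [← LPoisson.monomial_mul]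
        ring
      rw [key]
      exact LPoisson.InP_single ε _ _
        (fun P => fderiv ℂ (c₁ x) P ((Pi.single j 1 : Fin d → ℂ), 0) *
          fderiv ℂ (c₂ y) P (0, (Pi.single j 1 : Fin d → ℂ)))
        ((LPoisson.contDiff_pd _ (hc₁ x) _).mul (LPoisson.contDiff_pd _ (hc₂ y) _)) hdeg hcon
    · have key : (fun z : PhSp d n =>
          (fderiv ℂ (c₁ x) z.1 (0, (Pi.single j 1 : Fin d → ℂ)) * monomial d n ε x z) *
            (fderiv ℂ (c₂ y) z.1 ((Pi.single j 1 : Fin d → ℂ), 0) * monomial d n ε y z))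
          = fun z => (fderiv ℂ (c₁ x) z.1 (0, (Pi.single j 1 : Fin d → ℂ)) *
              fderiv ℂ (c₂ y) z.1 ((Pi.single j 1 : Fin d → ℂ), 0)) *
            monomial d n ε (LPoisson.mulIdx x y) z := by
        funext z
        rw [← LPoisson.monomial_mul]
        ring
      rw [key]
      exact LPoisson.InP_single ε _ _
        (fun P => fderiv ℂ (c₁ x) P (0, (Pi.single j 1 : Fin d → ℂ)) *
          fderiv ℂ (c₂ y) P ((Pi.single j 1 : Fin d → ℂ), 0))
        ((LPoisson.contDiff_pd _ (hc₁ x) _).mul (LPoisson.contDiff_pd _ (hc₂ y) _)) hdeg hcon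
  · funext z
    simp only [pBr, Pi.add_apply]
    exact add_comm _ _


end
end
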